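/- arXiv:1607.01563 — 6 statements merged into one kernel-verified Lean document; each statement's English description precedes it below -/
import Mathlib

section
/- Let ρ be a non-degenerate symmetric bilinear form on ℝ³ and T ∈ SO(ρ) (ρ-preserving with det T = 1). Suppose Tξ = −ξ for some vector ξ with ρ(ξ,ξ) ≠ 0. Then T admits a +1 eigenvector η with ρ(η,η) ≠ 0. -/
open Matrix

/-- Let `ρ` (the symmetric matrix `P`, `det P ≠ 0`) be a non-degenerate symmetric
bilinear form on `ℝ³` and `T ∈ SO(ρ)`. If `Tξ = −ξ` for some non-null `ξ`, then
`T` admits a `+1` eigenvector which is non-null. -/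
theorem stmt5 (P T : Matrix (Fin 3) (Fin 3) ℝ)
    (hPsym : P.IsSymm) (hPnd : P.det ≠ 0)
    (hpres : ∀ x y : Fin 3 → ℝ,
      T.mulVec x ⬝ᵥ P.mulVec (T.mulVec y) = x ⬝ᵥ P.mulVec y)
    (hdet : T.det = 1)
    (ξ : Fin 3 → ℝ) (hξ : T.mulVec ξ = -ξ) (hnn : ξ ⬝ᵥ P.mulVec ξ ≠ 0) :
    ∃ η : Fin 3 → ℝ, T.mulVec η = η ∧ η ⬝ᵥ P.mulVec η ≠ 0 := by
  -- Symmetry of the form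
  have hsym : ∀ x y : Fin 3 → ℝ, x ⬝ᵥ P.mulVec y = y ⬝ᵥ P.mulVec x := by
    intro x y
    rw [Matrix.dotProduct_mulVec, ← Matrix.mulVec_transpose, hPsym.eq,
      dotProduct_comm]
  -- Non-degeneracy
  have hnd : ∀ v : Fin 3 → ℝ, (∀ w : Fin 3 → ℝ, v ⬝ᵥ P.mulVec w = 0) → v = 0 := by
    intro v hv
    have h1 : P.vecMul v = 0 := by
      have := hv (P.vecMul v)
      rw [Matrix.dotProduct_mulVec] at this
      exact dotProduct_self_eq_zero.mp this
    have h2 : P.mulVec v = 0 := by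
      rw [show P = Pᵀ from hPsym.eq.symm, Matrix.mulVec_transpose]
      exact h1
    by_contra hv0
    exact hPnd (Matrix.exists_mulVec_eq_zero_iff.mp ⟨v, hv0, h2⟩)
  -- The matrix identity Tᵀ * P * T = P
  have key : ∀ x y : Fin 3 → ℝ, x ⬝ᵥ (Tᵀ * P * T) *ᵥ y = x ⬝ᵥ P *ᵥ y := by
    intro x y
    calc x ⬝ᵥ (Tᵀ * P * T) *ᵥ y = x ⬝ᵥ Tᵀ *ᵥ ((P * T) *ᵥ y) := by
          rw [Matrix.mulVec_mulVec, Matrix.mul_assoc]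
      _ = T *ᵥ x ⬝ᵥ ((P * T) *ᵥ y) := by
          rw [Matrix.dotProduct_mulVec, Matrix.vecMul_transpose]
      _ = T *ᵥ x ⬝ᵥ P *ᵥ (T *ᵥ y) := by rw [← Matrix.mulVec_mulVec]
      _ = x ⬝ᵥ P *ᵥ y := hpres x y
  have hMv : ∀ y : Fin 3 → ℝ, (Tᵀ * P * T) *ᵥ y = P *ᵥ y := by
    intro y
    have hx : ∀ x : Fin 3 → ℝ, x ⬝ᵥ ((Tᵀ * P * T) *ᵥ y - P *ᵥ y) = 0 := by
      intro x
      rw [dotProduct_sub, key, sub_self]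
    have := hx ((Tᵀ * P * T) *ᵥ y - P *ᵥ y)
    rw [dotProduct_self_eq_zero, sub_eq_zero] at this
    exact this
  have hM : Tᵀ * P * T = P := by
    ext i j
    have := congrFun (hMv (Pi.single j 1)) i
    simpa [Matrix.mulVec_single] using this
  -- det (T - 1) = 0
  have hdet1 : (T - 1).det = 0 := by
    have key : (T - 1)ᵀ * (P * T) = -(P * (T - 1)) := by
      have : Tᵀ * (P * T) = P := by rw [← Matrix.mul_assoc]; exact hM
      rw [Matrix.transpose_sub, Matrix.sub_mul, this]
      simp [Matrix.mul_sub, Matrix.sub_mul]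
    have hd := congrArg Matrix.det key
    rw [Matrix.det_mul, Matrix.det_transpose, Matrix.det_mul, hdet, mul_one] at hd
    rw [show -(P * (T - 1)) = (-1 : ℝ) • (P * (T - 1)) by simp] at hd
    rw [Matrix.det_smul, Matrix.det_mul] at hd
    have : (T - 1).det * P.det = -(P.det * (T - 1).det) := by
      rw [hd]; ring_nf; simp [Fintype.card_fin]; ring
    have h2 : 2 * ((T - 1).det * P.det) = 0 := by linarith [this]
    rcases mul_eq_zero.mp (by linarith : (T - 1).det * P.det = 0) with h | h
    · exact h
    · exact absurd h hPnd
  -- +1 eigenvector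
  obtain ⟨η, hη0, hηv⟩ := Matrix.exists_mulVec_eq_zero_iff.mpr hdet1
  have hTη : T.mulVec η = η := by
    have := hηv
    rw [Matrix.sub_mulVec, Matrix.one_mulVec, sub_eq_zero] at this
    exact this
  by_cases hηn : η ⬝ᵥ P.mulVec η ≠ 0
  · exact ⟨η, hTη, hηn⟩
  push_neg at hηn
  exfalso
  -- ρ(ξ,η) = 0
  have hξη : ξ ⬝ᵥ P.mulVec η = 0 := by
    have := hpres ξ η
    rw [hξ, hTη] at this
    rw [neg_dotProduct] at this
    linarith
  have hηξ : η ⬝ᵥ P.mulVec ξ = 0 := by rw [hsym]; exact hξη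
  -- find w with ρ(η,w) ≠ 0
  have hw : ∃ w : Fin 3 → ℝ, η ⬝ᵥ P.mulVec w ≠ 0 := by
    by_contra hc
    push_neg at hc
    exact hη0 (hnd η hc)
  obtain ⟨w, hw⟩ := hw
  set a : ℝ := (ξ ⬝ᵥ P.mulVec w) / (ξ ⬝ᵥ P.mulVec ξ) with ha
  set w' : Fin 3 → ℝ := w - a • ξ with hw'def
  have hξw' : ξ ⬝ᵥ P.mulVec w' = 0 := by
    rw [hw'def, Matrix.mulVec_sub, Matrix.mulVec_smul, dotProduct_sub, dotProduct_smul,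
      smul_eq_mul, ha, div_mul_cancel₀ _ hnn, sub_self]
  have hηw' : η ⬝ᵥ P.mulVec w' = η ⬝ᵥ P.mulVec w := by
    rw [hw'def, Matrix.mulVec_sub, Matrix.mulVec_smul, dotProduct_sub, dotProduct_smul,
      smul_eq_mul, hηξ]
    ring
  have hηw'ne : η ⬝ᵥ P.mulVec w' ≠ 0 := by rw [hηw']; exact hw
  have hw'ξ : w' ⬝ᵥ P.mulVec ξ = 0 := by rw [hsym]; exact hξw'
  have hw'η : w' ⬝ᵥ P.mulVec η ≠ 0 := by rw [hsym]; exact hηw'ne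
  -- the basis matrix (rows ξ, η, w')
  set R : Matrix (Fin 3) (Fin 3) ℝ := Matrix.of ![ξ, η, w'] with hR
  have hBmul : ∀ c : Fin 3 → ℝ, Rᵀ.mulVec c = c 0 • ξ + c 1 • η + c 2 • w' := by
    intro c
    funext i
    simp only [Matrix.mulVec, dotProduct, Fin.sum_univ_three, Matrix.transpose_apply,
      hR, Matrix.of_apply, Matrix.cons_val_zero, Matrix.cons_val_one, Matrix.head_cons,
      Matrix.cons_val_two, Matrix.tail_cons, Pi.add_apply, Pi.smul_apply, smul_eq_mul]
    ring
  have hdetR : R.det ≠ 0 := by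
    intro h
    have h' : Rᵀ.det = 0 := by rw [Matrix.det_transpose]; exact h
    obtain ⟨c, hc0, hc⟩ := Matrix.exists_mulVec_eq_zero_iff.mpr h'
    rw [hBmul c] at hc
    have e1 : c 0 = 0 := by
      have h := congrArg (fun v => ξ ⬝ᵥ P.mulVec v) hc
      simp only [Matrix.mulVec_add, Matrix.mulVec_smul, dotProduct_add, dotProduct_smul,
        smul_eq_mul, Matrix.mulVec_zero, dotProduct_zero, hξη, hξw', mul_zero, add_zero] at h
      exact (mul_eq_zero.mp h).resolve_right hnn
    have e2 : c 2 = 0 := by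
      have h := congrArg (fun v => η ⬝ᵥ P.mulVec v) hc
      simp only [Matrix.mulVec_add, Matrix.mulVec_smul, dotProduct_add, dotProduct_smul,
        smul_eq_mul, Matrix.mulVec_zero, dotProduct_zero, hηξ, hηn, mul_zero, add_zero,
        zero_add] at h
      exact (mul_eq_zero.mp h).resolve_right hηw'ne
    have e3 : c 1 = 0 := by
      rw [e1, e2] at hc
      simp only [zero_smul, zero_add, add_zero] at hc
      exact (smul_eq_zero.mp hc).resolve_right hη0
    apply hc0
    funext i
    fin_cases i
    · exact e1
    · exact e3
    · exact e2
  -- decomposition of u = T w'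
  set u : Fin 3 → ℝ := T.mulVec w' with hu
  set c : Fin 3 → ℝ := (Rᵀ)⁻¹.mulVec u with hc
  have hudec : u = c 0 • ξ + c 1 • η + c 2 • w' := by
    rw [← hBmul c, hc, Matrix.mulVec_mulVec, Matrix.mul_nonsing_inv Rᵀ
      (by rw [Matrix.det_transpose]; simpa using hdetR), Matrix.one_mulVec]
  -- ρ(η, u) = ρ(η, w') gives c 2 = 1
  have hηu : η ⬝ᵥ P.mulVec u = η ⬝ᵥ P.mulVec w' := by
    have := hpres η w'
    rw [hTη] at this
    exact this
  have hc2 : c 2 = 1 := by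
    rw [hudec] at hηu
    simp only [Matrix.mulVec_add, Matrix.mulVec_smul, dotProduct_add, dotProduct_smul,
      smul_eq_mul, hηξ, hηn, mul_zero, add_zero, zero_add] at hηu
    have h : (c 2 - 1) * (η ⬝ᵥ P.mulVec w') = 0 := by ring_nf; ring_nf at hηu; linarith
    have := (mul_eq_zero.mp h).resolve_right hηw'ne
    linarith
  -- the product R * Tᵀ has rows -ξ, η, u
  have hRT : R * Tᵀ = Matrix.of ![-ξ, η, u] := by
    ext i j
    rw [Matrix.mul_apply]
    fin_cases i
    · have h := congrFun hξ j
      simp [hR, Matrix.mulVec, dotProduct, Fin.sum_univ_three] at h ⊢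
      linarith
    · have h := congrFun hTη j
      simp [hR, Matrix.mulVec, dotProduct, Fin.sum_univ_three] at h ⊢
      linarith
    · have h : u j = (T.mulVec w') j := by rw [hu]
      simp [hR, Matrix.mulVec, dotProduct, Fin.sum_univ_three] at h ⊢
      linarith
  -- determinant computation
  have hz1 : (Matrix.updateRow R 2 ξ).det = 0 := by
    apply Matrix.det_zero_of_row_eq (show (0 : Fin 3) ≠ 2 by decide)
    rw [Matrix.updateRow_ne (by decide), Matrix.updateRow_self]
    rfl
  have hz2 : (Matrix.updateRow R 2 η).det = 0 := by
    apply Matrix.det_zero_of_row_eq (show (1 : Fin 3) ≠ 2 by decide)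
    rw [Matrix.updateRow_ne (by decide), Matrix.updateRow_self]
    rfl
  have hRw' : Matrix.updateRow R 2 w' = R := by
    conv_rhs => rw [← Matrix.updateRow_eq_self R 2]
    rfl
  have heq1 : Matrix.of ![-ξ, η, u] =
      Matrix.updateRow (Matrix.updateRow R 2 u) 0 ((-1 : ℝ) • ξ) := by
    ext i j
    fin_cases i <;>
      simp [hR, Matrix.updateRow_apply]
  have heq2 : Matrix.updateRow (Matrix.updateRow R 2 u) 0 ξ = Matrix.updateRow R 2 u := by
    have h0 : (Matrix.updateRow R 2 u) 0 = ξ := by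
      rw [Matrix.updateRow_ne (by decide)]
      rfl
    conv_rhs => rw [← Matrix.updateRow_eq_self (Matrix.updateRow R 2 u) 0, h0]
  have hdetu : (Matrix.updateRow R 2 u).det = R.det := by
    rw [hudec, Matrix.det_updateRow_add, Matrix.det_updateRow_add,
      Matrix.det_updateRow_smul, Matrix.det_updateRow_smul, Matrix.det_updateRow_smul,
      hz1, hz2, hRw', hc2]
    ring
  have hfinal : R.det = -R.det := by
    have h1 : (R * Tᵀ).det = R.det := by
      rw [Matrix.det_mul, Matrix.det_transpose, hdet, mul_one]
    rw [hRT, heq1, Matrix.det_updateRow_smul, heq2, hdetu] at h1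
    linarith
  apply hdetR
  linarith
end

section
/- Let a > 0 and let Γ be the constant torsion-free Christoffel symbol on ℝ³ whose nonzero components (up to the symmetry Γ_{ij}^k = Γ_{ji}^k) in the standard basis e₁,e₂,e₃ are determined, via the complex basis f₁ = e₁ + i e₂, f₂ = e₁ − i e₂, f₃ = e₃, by Γ(f₁,f₃,f¹) = Γ(f₃,f₁,f¹) = a, Γ(f₂,f₃,f²) = Γ(f₃,f₂,f²) = a, Γ(f₁,f₂,f³) = Γ(f₂,f₁,f³) = a, Γ(f₃,f₃,f³) = (a²+1)/a. Then the Ricci tensor ρ_{jk} = Γ_{in}^i Γ_{jk}^n − Γ_{jn}^i Γ_{ik}^n, computed relative to the real basis {e₁,e₂,e₃}, equals diag(a²+1, a²+1, 2). -/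
open BigOperators

/-- The Ricci tensor of constant Christoffel symbols `Γ_{ij}^k`:
`ρ_{jk} = Γ_{in}^i Γ_{jk}^n − Γ_{jn}^i Γ_{ik}^n`. -/
def ricci (m : ℕ) (Γ : Fin m → Fin m → Fin m → ℝ) : Fin m → Fin m → ℝ :=
  fun j k => ∑ i, ∑ n, (Γ i n i * Γ j k n - Γ j n i * Γ i k n)

/-- The torsion-free Christoffel symbol on `ℝ³` determined (via the complex basis
`f₁ = e₁ + ie₂`, `f₂ = e₁ − ie₂`, `f₃ = e₃`) by `Γ(f₁,f₃,f¹) = Γ(f₃,f₁,f¹) = a`,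
`Γ(f₂,f₃,f²) = Γ(f₃,f₂,f²) = a`, `Γ(f₁,f₂,f³) = Γ(f₂,f₁,f³) = a`,
`Γ(f₃,f₃,f³) = (a²+1)/a`; in the real basis its nonzero components are
`Γ_{11}³ = Γ_{22}³ = a`, `Γ_{13}¹ = Γ_{31}¹ = a`, `Γ_{23}² = Γ_{32}² = a`,
`Γ_{33}³ = (a²+1)/a`. -/
noncomputable def gammaA (a : ℝ) : Fin 3 → Fin 3 → Fin 3 → ℝ :=
  ![![![0, 0, a], ![0, 0, 0], ![a, 0, 0]],
    ![![0, 0, 0], ![0, 0, a], ![0, a, 0]],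
    ![![a, 0, 0], ![0, a, 0], ![0, 0, (a ^ 2 + 1) / a]]]

/-- For `a > 0`, the Ricci tensor of `gammaA a`, computed relative to the real
basis `{e₁,e₂,e₃}`, equals `diag(a²+1, a²+1, 2)`. -/
theorem stmt7 (a : ℝ) (ha : 0 < a) :
    ∀ j k, ricci 3 (gammaA a) j k =
      ![![a ^ 2 + 1, 0, 0], ![0, a ^ 2 + 1, 0], ![0, 0, 2]] j k := by
  have ha' : a ≠ 0 := ne_of_gt ha
  intro j k
  fin_cases j <;> fin_cases k <;>
    simp [ricci, gammaA, Fin.sum_univ_succ, Matrix.vecHead, Matrix.vecTail] <;>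
    (try field_simp) <;> ring
end

section
/- Let Γ be the Christoffel symbol on ℝ³ of the previous context (Γ_{12}³ = a, Γ_{13}¹ = b, Γ_{23}² = c, Γ_{33}³ = d, symmetric in lower indices) and for α ≠ 0 let T_α ∈ GL(3,ℝ) be given by T_α e₁ = α e₁, T_α e₂ = α⁻¹ e₂, T_α e₃ = e₃. Then T_α Γ = Γ for every α ≠ 0, i.e. the isotropy group of Γ contains the non-compact group SO(1,1). In particular, choosing a,b,c,d with ad ≠ 0 and −b²+bd+c(−c+d) ≠ 0 of appropriate signs, there is a torsion-free Type A structure on ℝ³ with non-degenerate Ricci tensor whose symmetry group is non-compact. -/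
open Matrix BigOperators

/-- The Christoffel symbol on `ℝ³`, symmetric in its lower indices, with nonzero
components `Γ_{12}³ = Γ_{21}³ = a`, `Γ_{13}¹ = Γ_{31}¹ = b`, `Γ_{23}² = Γ_{32}² = c`,
`Γ_{33}³ = d`. -/
def gammaB (a b c d : ℝ) : Fin 3 → Fin 3 → Fin 3 → ℝ :=
  ![![![0, 0, 0], ![0, 0, a], ![b, 0, 0]],
    ![![0, 0, a], ![0, 0, 0], ![0, c, 0]],
    ![![b, 0, 0], ![0, c, 0], ![0, 0, d]]]

/-- For every `α ≠ 0`, the element `T_α = diag(α, α⁻¹, 1)` of `SO(1,1) ⊆ GL(3,ℝ)`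
fixes `gammaB a b c d` under the `(2,1)`-tensor action
`(TΓ)_{ij}^k = ∑ T_{pi} T_{qj} (T⁻¹)_{kr} Γ_{pq}^r`; i.e. the isotropy group of this
torsion-free Type A structure contains the non-compact group `SO(1,1)`. -/
theorem stmt9 (a b c d α : ℝ) (hα : α ≠ 0) :
    let T : Matrix (Fin 3) (Fin 3) ℝ := Matrix.diagonal ![α, α⁻¹, 1]
    let Tinv : Matrix (Fin 3) (Fin 3) ℝ := Matrix.diagonal ![α⁻¹, α, 1]
    ∀ i j k, (∑ p, ∑ q, ∑ r, T p i * T q j * Tinv k r * gammaB a b c d p q r) =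
      gammaB a b c d i j k := by
  intro T Tinv i j k
  fin_cases i <;> fin_cases j <;> fin_cases k <;>
    simp [T, Tinv, gammaB, Fin.sum_univ_three, Matrix.diagonal, Matrix.vecHead, Matrix.vecTail] <;>
    field_simp
end

section
/- Let Γ ∈ ℝ³⊗ℝ³⊗ℝ³ be a constant Christoffel symbol symmetric in its lower indices, with nonzero components only Γ_{22}¹ = c₅, Γ_{13}¹ = c₃+c₅, Γ_{23}¹ = c₄, Γ_{23}² = c₃, Γ_{33}¹ = c₆, Γ_{33}² = −2c₄, Γ_{33}³ = 2c₃ (and the symmetric counterparts). Then the Ricci tensor ρ_{jk} = Γ_{in}^i Γ_{jk}^n − Γ_{jn}^i Γ_{ik}^n satisfies ρ_{1k} = ρ_{k1} = 0 for all k; in particular ρ is degenerate. -/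
open BigOperators

/-- The Christoffel symbol on `ℝ³`, symmetric in its lower indices, with nonzero
components `Γ_{22}¹ = c₅`, `Γ_{13}¹ = c₃+c₅`, `Γ_{23}¹ = c₄`, `Γ_{23}² = c₃`,
`Γ_{33}¹ = c₆`, `Γ_{33}² = −2c₄`, `Γ_{33}³ = 2c₃`. -/
def gammaC (c₃ c₄ c₅ c₆ : ℝ) : Fin 3 → Fin 3 → Fin 3 → ℝ :=
  ![![![0, 0, 0], ![0, 0, 0], ![c₃ + c₅, 0, 0]],
    ![![0, 0, 0], ![c₅, 0, 0], ![c₄, c₃, 0]],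
    ![![c₃ + c₅, 0, 0], ![c₄, c₃, 0], ![c₆, -2 * c₄, 2 * c₃]]]

/-- The Ricci tensor of `gammaC` satisfies `ρ_{1k} = ρ_{k1} = 0` for all `k`;
in particular `ρ` is degenerate. -/
theorem stmt10 (c₃ c₄ c₅ c₆ : ℝ) :
    (∀ k, ricci 3 (gammaC c₃ c₄ c₅ c₆) 0 k = 0 ∧ ricci 3 (gammaC c₃ c₄ c₅ c₆) k 0 = 0) ∧
    (Matrix.of (ricci 3 (gammaC c₃ c₄ c₅ c₆))).det = 0 := by
  have h : ∀ k, ricci 3 (gammaC c₃ c₄ c₅ c₆) 0 k = 0 ∧ ricci 3 (gammaC c₃ c₄ c₅ c₆) k 0 = 0 := by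
    intro k
    fin_cases k <;> constructor <;>
      simp [ricci, gammaC, Fin.sum_univ_succ]
  refine ⟨h, ?_⟩
  rw [Matrix.det_fin_three]
  simp [(h 0).1, (h 1).2, (h 2).2]
end

section
/- Let Γ be the constant Christoffel symbol on ℝ³, symmetric in its lower indices, with nonzero independent components Γ_{12}³ = a³, Γ_{13}² = a², Γ_{23}¹ = a¹ (each Christoffel component containing each index 1,2,3 exactly once). Then its Ricci tensor is ρ = −2 diag(a²a³, a¹a³, a¹a²). -/
open BigOperators

/-- The Christoffel symbol on `ℝ³`, symmetric in its lower indices, with nonzero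
components `Γ_{12}³ = Γ_{21}³ = a₃`, `Γ_{13}² = Γ_{31}² = a₂`, `Γ_{23}¹ = Γ_{32}¹ = a₁`
(each component containing each index exactly once). -/
def gammaD (a₁ a₂ a₃ : ℝ) : Fin 3 → Fin 3 → Fin 3 → ℝ :=
  ![![![0, 0, 0], ![0, 0, a₃], ![0, a₂, 0]],
    ![![0, 0, a₃], ![0, 0, 0], ![a₁, 0, 0]],
    ![![0, a₂, 0], ![a₁, 0, 0], ![0, 0, 0]]]

/-- The Ricci tensor of `gammaD a₁ a₂ a₃` is `−2 diag(a₂a₃, a₁a₃, a₁a₂)`. -/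
theorem stmt13 (a₁ a₂ a₃ : ℝ) :
    ∀ j k, ricci 3 (gammaD a₁ a₂ a₃) j k =
      ![![-2 * (a₂ * a₃), 0, 0], ![0, -2 * (a₁ * a₃), 0], ![0, 0, -2 * (a₁ * a₂)]] j k := by
  intro j k
  fin_cases j <;> fin_cases k <;>
    simp [ricci, gammaD, Fin.sum_univ_three, Matrix.vecHead, Matrix.vecTail] <;> ring
end

section
/- Let Γ be a constant Christoffel symbol on ℝ² whose Ricci tensor ρ_Γ is non-degenerate and indefinite (signature (1,1)), normalized so that in a hyperbolic basis ρ_Γ(e₁,e₁) = ρ_Γ(e₂,e₂) = 0, ρ_Γ(e₁,e₂) = 1. Let T_a ∈ SO(1,1) be given by T_a e₁ = a e₁, T_a e₂ = a⁻¹ e₂ (a ≠ 0). If T_a Γ = Γ and Γ ≠ 0, then a = 1. In particular the isotropy group of Γ inside this SO(1,1) is trivial. -/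
open Matrix BigOperators

/-- Let `Γ` be a constant Christoffel symbol on `ℝ²` whose Ricci tensor is
non-degenerate indefinite, normalized hyperbolically (`ρ(e₁,e₁) = ρ(e₂,e₂) = 0`,
`ρ(e₁,e₂) = 1`). If `T_a = diag(a, a⁻¹) ∈ SO(1,1)` with `a > 0` fixes `Γ` under the
`(2,1)`-tensor action and `Γ ≠ 0`, then `a = 1`: the isotropy group of `Γ` inside
this `SO(1,1)` is trivial. -/
theorem stmt16 (Γ : Fin 2 → Fin 2 → Fin 2 → ℝ) (a : ℝ) (ha : 0 < a)
    (hρ11 : ricci 2 Γ 0 0 = 0) (hρ22 : ricci 2 Γ 1 1 = 0) (hρ12 : ricci 2 Γ 0 1 = 1)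
    (hΓ : Γ ≠ 0)
    (hfix : let T : Matrix (Fin 2) (Fin 2) ℝ := Matrix.diagonal ![a, a⁻¹]
            let Tinv : Matrix (Fin 2) (Fin 2) ℝ := Matrix.diagonal ![a⁻¹, a]
            ∀ i j k, (∑ p, ∑ q, ∑ r, T p i * T q j * Tinv k r * Γ p q r) = Γ i j k) :
    a = 1 := by
  simp only [] at hfix
  have aux : ∀ c x : ℝ, x ≠ 0 → c * x = x → c = 1 := fun c x hx h =>
    mul_right_cancel₀ hx (h.trans (one_mul x).symm)
  have key : ∀ i j k : Fin 2, Γ i j k ≠ 0 → a = 1 := by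
    intro i j k hne
    have h := hfix i j k
    fin_cases i <;> fin_cases j <;> fin_cases k <;>
      simp [Fin.sum_univ_two, Matrix.diagonal, Matrix.of_apply] at h hne <;>
      field_simp at h <;>
      first
        | exact h
        | (have h1 : a ≤ 1 := by nlinarith [mul_pos ha ha]
           have h2 : 1 ≤ a := by nlinarith [mul_pos ha ha]
           linarith)
  by_contra hne1
  apply hΓ
  funext i j k
  by_contra h
  exact hne1 (key i j k h)
end
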